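/- arXiv:2103.03813 — 2 statements merged into one kernel-verified Lean document; each statement's English description precedes it below -/
import Mathlib

section
/- Let L > 0 and let φ : [0, L] → ℝ be continuous and positive with m := inf_{x ∈ [0,L]} φ(x) > 0 and M := sup_{x ∈ [0,L]} φ(x). Then for every function u in the Sobolev space H¹(0,L) with ∫_0^L u·φ² dx = 0, one has ∫_0^L (u')² φ² dx ≥ (m/M)²·(π²/L²)·∫_0^L u² φ² dx. -/
open Real intervalIntegral Set

lemma wirtinger_mixed (l : ℝ) (hl : 0 < l) (v v' : ℝ → ℝ)
    (hd : ∀ x ∈ Icc (0:ℝ) l, HasDerivAt v (v' x) x)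
    (hc : ContinuousOn v' (Icc 0 l))
    (h0 : v l = 0) :
    (π / (2*l))^2 * ∫ x in (0:ℝ)..l, (v x)^2 ≤ ∫ x in (0:ℝ)..l, (v' x)^2 := by
  set c : ℝ := π / (2*l) with hc_def
  have hπ := pi_pos
  have hcpos : 0 < c := by positivity
  have hcl : c * l = π / 2 := by rw [hc_def]; field_simp
  have hvcont : ContinuousOn v (Icc 0 l) := fun x hx => (hd x hx).continuousAt.continuousWithinAt
  obtain ⟨C, hC⟩ := isCompact_Icc.exists_bound_of_continuousOn hc
  obtain ⟨B, hB⟩ := isCompact_Icc.exists_bound_of_continuousOn hvcont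
  have h0l : (0:ℝ) ∈ Icc (0:ℝ) l := ⟨le_rfl, hl.le⟩
  have hC0 : 0 ≤ C := le_trans (norm_nonneg _) (hC 0 h0l)
  have hB0 : 0 ≤ B := le_trans (norm_nonneg _) (hB 0 h0l)
  -- integrability helper
  have hInt : ∀ {f : ℝ → ℝ} {a b : ℝ}, a ≤ b → (0:ℝ) ≤ a → b ≤ l →
      ContinuousOn f (Icc 0 l) → IntervalIntegrable f MeasureTheory.volume a b := by
    intro f a b hab h0a hbl hf
    apply ContinuousOn.intervalIntegrable
    rw [uIcc_of_le hab]
    exact hf.mono (Icc_subset_Icc h0a hbl)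
  -- key estimate for s < l
  have key : ∀ s, s ∈ Ioo (0:ℝ) l →
      c^2 * ∫ x in (0:ℝ)..s, (v x)^2 ≤ (∫ x in (0:ℝ)..s, (v' x)^2) + C^2 * (l - s) := by
    intro s hs
    have hssub : Icc (0:ℝ) s ⊆ Icc 0 l := Icc_subset_Icc le_rfl hs.2.le
    have hcos : ∀ x ∈ Icc (0:ℝ) s, 0 < cos (c*x) := by
      intro x hx
      apply cos_pos_of_mem_Ioo
      constructor
      · nlinarith [hx.1]
      · have : c * x ≤ c * s := by nlinarith [hx.2]
        have : c * s < c * l := by nlinarith [hs.2]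
        nlinarith [hx.2, hcl]
    set F : ℝ → ℝ := fun x => c * tan (c*x) * (v x)^2 with hF_def
    set F' : ℝ → ℝ := fun x => c * (1 / cos (c*x)^2 * c) * (v x)^2
        + c * tan (c*x) * (2 * v x * v' x) with hF'_def
    have hFd : ∀ x ∈ Icc (0:ℝ) s, HasDerivAt F (F' x) x := by
      intro x hx
      have hcx : cos (c*x) ≠ 0 := (hcos x hx).ne'
      have hinner : HasDerivAt (fun y : ℝ => c * y) c x := by
        simpa using (hasDerivAt_id x).const_mul c
      have htan : HasDerivAt (fun y : ℝ => tan (c*y)) (1 / cos (c*x)^2 * c) x :=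
        (Real.hasDerivAt_tan hcx).comp x hinner
      have h1 : HasDerivAt (fun y : ℝ => c * tan (c*y)) (c * (1 / cos (c*x)^2 * c)) x :=
        htan.const_mul c
      have h2 : HasDerivAt (fun y : ℝ => (v y)^2) (2 * v x * v' x) x := by
        have := (hd x (hssub hx)).fun_pow 2
        simpa using this
      have := h1.fun_mul h2
      convert this using 1
    have hF'cont : ContinuousOn F' (Icc 0 s) := by
      have hcoscont : ContinuousOn (fun x => cos (c*x)) (Icc 0 s) :=
        (Real.continuous_cos.comp (continuous_const.mul continuous_id)).continuousOn
      have htancont : ContinuousOn (fun x => tan (c*x)) (Icc 0 s) := by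
        intro x hx
        exact ((Real.continuousAt_tan.2 (hcos x hx).ne').comp
          ((continuous_const.mul continuous_id).continuousAt)).continuousWithinAt
      have hvc : ContinuousOn v (Icc 0 s) := hvcont.mono hssub
      have hv'c : ContinuousOn v' (Icc 0 s) := hc.mono hssub
      apply ContinuousOn.add
      · exact ((continuousOn_const.mul ((continuousOn_const.div
          (hcoscont.pow 2) (fun x hx => pow_ne_zero 2 (hcos x hx).ne')).mul
          continuousOn_const)).mul (hvc.pow 2))
      · exact (continuousOn_const.mul htancont).mul
          ((continuousOn_const.mul hvc).mul hv'c)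
    have hFTC : ∫ x in (0:ℝ)..s, F' x = F s - F 0 := by
      apply intervalIntegral.integral_eq_sub_of_hasDerivAt
      · intro x hx
        rw [uIcc_of_le hs.1.le] at hx
        exact hFd x hx
      · apply ContinuousOn.intervalIntegrable
        rw [uIcc_of_le hs.1.le]
        exact hF'cont
    have hmono : ∫ x in (0:ℝ)..s, c^2 * (v x)^2 ≤ ∫ x in (0:ℝ)..s, ((v' x)^2 + F' x) := by
      apply intervalIntegral.integral_mono_on hs.1.le
      · exact hInt hs.1.le le_rfl hs.2.le ((continuousOn_const.mul (hvcont.pow 2)))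
      · apply ContinuousOn.intervalIntegrable
        rw [uIcc_of_le hs.1.le]
        exact ((hc.mono hssub).pow 2).add hF'cont
      · intro x hx
        have hcx : cos (c*x) ≠ 0 := (hcos x hx).ne'
        have htansq : 1 / cos (c*x)^2 = 1 + tan (c*x)^2 := by
          have := Real.inv_one_add_tan_sq hcx
          field_simp at this ⊢
          linarith [this]
        simp only [hF'_def, htansq]
        nlinarith [sq_nonneg (v' x + c * tan (c*x) * v x)]
    have hsplit : ∫ x in (0:ℝ)..s, ((v' x)^2 + F' x)
        = (∫ x in (0:ℝ)..s, (v' x)^2) + ∫ x in (0:ℝ)..s, F' x := by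
      apply intervalIntegral.integral_add
      · exact hInt hs.1.le le_rfl hs.2.le (hc.pow 2)
      · apply ContinuousOn.intervalIntegrable
        rw [uIcc_of_le hs.1.le]
        exact hF'cont
    have hF0 : F 0 = 0 := by simp [hF_def]
    -- bound F s
    have hFs : F s ≤ C^2 * (l - s) := by
      have hθpos : 0 < c * (l - s) := by nlinarith [hs.2]
      have hθlt : c * (l - s) < π/2 := by nlinarith [hs.1, hcl]
      have htanlb : c * (l - s) < tan (c * (l - s)) := Real.lt_tan hθpos hθlt
      have htaneq : tan (c*s) = (tan (c*(l-s)))⁻¹ := by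
        rw [← Real.tan_pi_div_two_sub]
        congr 1
        rw [← hcl]; ring
      have htanub : tan (c*s) ≤ (c*(l-s))⁻¹ := by
        rw [htaneq]
        exact inv_anti₀ hθpos htanlb.le
      have htannn : 0 ≤ tan (c*s) := by
        rw [htaneq]
        exact inv_nonneg.2 (le_trans hθpos.le htanlb.le)
      have hvs : |v s| ≤ C * (l - s) := by
        have hint : ∫ x in s..l, v' x = v l - v s :=
          intervalIntegral.integral_eq_sub_of_hasDerivAt
            (fun x hx => hd x (by rw [uIcc_of_le hs.2.le] at hx; exact Icc_subset_Icc hs.1.le le_rfl hx))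
            (hInt hs.2.le hs.1.le le_rfl hc)
        have := intervalIntegral.norm_integral_le_of_norm_le_const
          (C := C) (f := v') (a := s) (b := l) ?_
        · rw [hint, h0] at this
          rw [Real.norm_eq_abs, abs_of_nonneg (by linarith [hs.2.le] : (0:ℝ) ≤ l - s)] at this
          simpa using this
        · intro x hx
          rw [uIoc_of_le hs.2.le] at hx
          exact hC x ⟨le_trans hs.1.le hx.1.le, hx.2⟩
      have hvs2 : (v s)^2 ≤ (C*(l-s))^2 := by
        rw [← sq_abs]
        apply pow_le_pow_left₀ (abs_nonneg _) hvs
      have : F s ≤ c * (c*(l-s))⁻¹ * (C*(l-s))^2 := by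
        simp only [hF_def]
        apply mul_le_mul
        · exact mul_le_mul_of_nonneg_left htanub hcpos.le
        · exact hvs2
        · exact sq_nonneg _
        · positivity
      calc F s ≤ c * (c*(l-s))⁻¹ * (C*(l-s))^2 := this
        _ = C^2 * (l - s) := by
            field_simp
    have hcmul : ∫ x in (0:ℝ)..s, c^2 * (v x)^2 = c^2 * ∫ x in (0:ℝ)..s, (v x)^2 :=
      intervalIntegral.integral_const_mul _ _
    rw [hcmul, hsplit, hFTC, hF0] at hmono
    linarith [hmono, hFs]
  -- now the limit argument
  set I1 : ℝ := ∫ x in (0:ℝ)..l, (v' x)^2 with hI1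
  set I2 : ℝ := ∫ x in (0:ℝ)..l, (v x)^2 with hI2
  show c^2 * I2 ≤ I1
  apply le_of_forall_pos_le_add
  intro ε hε
  set K : ℝ := C^2 + c^2 * B^2 with hK
  have hK0 : 0 ≤ K := by positivity
  set s : ℝ := max (l/2) (l - ε/(K+1)) with hs_def
  have hs : s ∈ Ioo (0:ℝ) l := by
    constructor
    · exact lt_max_of_lt_left (by linarith)
    · apply max_lt (by linarith)
      have : 0 < ε/(K+1) := by positivity
      linarith
  have hls : l - s ≤ ε/(K+1) := by
    have : l - ε/(K+1) ≤ s := le_max_right _ _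
    linarith
  have h1 : (∫ x in (0:ℝ)..s, (v x)^2) + ∫ x in s..l, (v x)^2 = I2 :=
    intervalIntegral.integral_add_adjacent_intervals
      (hInt hs.1.le le_rfl hs.2.le (hvcont.pow 2))
      (hInt hs.2.le hs.1.le le_rfl (hvcont.pow 2))
  have h2 : (∫ x in (0:ℝ)..s, (v' x)^2) + ∫ x in s..l, (v' x)^2 = I1 :=
    intervalIntegral.integral_add_adjacent_intervals
      (hInt hs.1.le le_rfl hs.2.le (hc.pow 2))
      (hInt hs.2.le hs.1.le le_rfl (hc.pow 2))
  have h3 : ∫ x in s..l, (v x)^2 ≤ B^2 * (l - s) := by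
    have := intervalIntegral.norm_integral_le_of_norm_le_const
      (C := B^2) (f := fun x => (v x)^2) (a := s) (b := l) ?_
    · rw [Real.norm_eq_abs, abs_of_nonneg (by linarith [hs.2.le] : (0:ℝ) ≤ l - s)] at this
      exact le_trans (le_abs_self _) this
    · intro x hx
      rw [uIoc_of_le hs.2.le] at hx
      have hxm : x ∈ Icc (0:ℝ) l := ⟨le_trans hs.1.le hx.1.le, hx.2⟩
      have := hB x hxm
      rw [Real.norm_eq_abs] at this
      show ‖v x ^ 2‖ ≤ B ^ 2
      rw [Real.norm_eq_abs, abs_of_nonneg (sq_nonneg _), ← sq_abs (v x)]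
      apply pow_le_pow_left₀ (abs_nonneg _) this
  have h4 : 0 ≤ ∫ x in s..l, (v' x)^2 :=
    intervalIntegral.integral_nonneg hs.2.le (fun x _ => sq_nonneg _)
  have h5 := key s hs
  have h6 : K * (l - s) ≤ ε := by
    have ha : K * (l - s) ≤ K * (ε/(K+1)) := mul_le_mul_of_nonneg_left hls hK0
    have h7 : K * (ε/(K+1)) ≤ ε := by
      rw [div_eq_mul_inv]
      have he : K * (ε * (K+1)⁻¹) = ε * (K * (K+1)⁻¹) := by ring
      rw [he]
      have hb : K * (K+1)⁻¹ ≤ 1 := by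
        rw [mul_inv_le_iff₀ (by linarith)]
        linarith
      nlinarith [hε.le]
    exact le_trans ha h7
  have h1' : c^2 * (∫ x in (0:ℝ)..s, (v x)^2) + c^2 * (∫ x in s..l, (v x)^2) = c^2 * I2 := by
    rw [← h1]; ring
  have h3' : c^2 * (∫ x in s..l, (v x)^2) ≤ c^2 * (B^2 * (l - s)) :=
    mul_le_mul_of_nonneg_left h3 (sq_nonneg c)
  have hK' : K * (l - s) = C^2 * (l - s) + c^2 * (B^2 * (l - s)) := by
    rw [hK]; ring
  linarith [h5, h1', h3', h2, h4, h6, hK']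


theorem stmt_8 (L m M : ℝ) (φ : ℝ → ℝ)
    (hL : 0 < L)
    (hφcont : ContinuousOn φ (Set.Icc 0 L))
    (hm : IsGLB (φ '' Set.Icc 0 L) m) (hm_pos : 0 < m)
    (hM : IsLUB (φ '' Set.Icc 0 L) M) :
    ∀ u u' : ℝ → ℝ,
      (∀ x ∈ Set.Icc 0 L, HasDerivAt u (u' x) x) →
      ContinuousOn u' (Set.Icc 0 L) →
      (∫ x in (0:ℝ)..L, u x * (φ x) ^ 2) = 0 →
      (∫ x in (0:ℝ)..L, (u' x) ^ 2 * (φ x) ^ 2) ≥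
        (m / M) ^ 2 * (π ^ 2 / L ^ 2) * ∫ x in (0:ℝ)..L, (u x) ^ 2 * (φ x) ^ 2 := by
  intro u u' hu hu'c hmean
  have hπ := pi_pos
  have hL2 : 0 < L/2 := by linarith
  have hsub1 : Icc (0:ℝ) (L/2) ⊆ Icc 0 L := Icc_subset_Icc le_rfl (by linarith)
  have hsub2 : Icc (L/2) L ⊆ Icc 0 L := Icc_subset_Icc (by linarith) le_rfl
  have hucont : ContinuousOn u (Icc 0 L) := fun x hx => (hu x hx).continuousAt.continuousWithinAt
  set k := u (L/2) with hk
  have hIntSub : ∀ {f : ℝ → ℝ} {a b : ℝ}, a ≤ b → (0:ℝ) ≤ a → b ≤ L →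
      ContinuousOn f (Icc 0 L) → IntervalIntegrable f MeasureTheory.volume a b := by
    intro f a b hab h0a hbl hf
    apply ContinuousOn.intervalIntegrable
    rw [uIcc_of_le hab]
    exact hf.mono (Icc_subset_Icc h0a hbl)
  have hφc2 : ContinuousOn (fun x => (φ x)^2) (Icc 0 L) := hφcont.pow 2
  have hukc : ContinuousOn (fun x => u x - k) (Icc 0 L) := hucont.sub continuousOn_const
  have hmem : ∀ x ∈ Icc (0:ℝ) L, m ≤ φ x ∧ φ x ≤ M := by
    intro x hx
    exact ⟨hm.1 ⟨x, hx, rfl⟩, hM.1 ⟨x, hx, rfl⟩⟩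
  have h0L : (0:ℝ) ∈ Icc (0:ℝ) L := ⟨le_rfl, hL.le⟩
  have hM_pos : 0 < M :=
    lt_of_lt_of_le hm_pos (le_trans (hmem 0 h0L).1 (hmem 0 h0L).2)
  -- first half
  have A1 := wirtinger_mixed (L/2) hL2 (fun x => u x - k) u'
      (fun x hx => (hu x (hsub1 hx)).sub_const k)
      (hu'c.mono hsub1) (by simp [hk])
  -- second half, via reflection
  have hmap : ∀ x ∈ Icc (0:ℝ) (L/2), L - x ∈ Icc (0:ℝ) L := by
    intro x hx
    exact ⟨by linarith [hx.2], by linarith [hx.1]⟩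
  have hd2 : ∀ x ∈ Icc (0:ℝ) (L/2),
      HasDerivAt (fun y => u (L - y) - k) (u' (L - x) * (-1)) x := by
    intro x hx
    have hinner : HasDerivAt (fun y : ℝ => L - y) (-1) x := by
      simpa using (hasDerivAt_const x L).fun_sub (hasDerivAt_id x)
    have := HasDerivAt.comp x (hu (L - x) (hmap x hx)) hinner
    exact this.sub_const k
  have hc2 : ContinuousOn (fun x => u' (L - x) * (-1)) (Icc (0:ℝ) (L/2)) := by
    apply ContinuousOn.mul _ continuousOn_const
    exact hu'c.comp ((continuous_const.sub continuous_id).continuousOn) hmap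
  have A2 := wirtinger_mixed (L/2) hL2 (fun x => u (L - x) - k) (fun x => u' (L - x) * (-1))
      hd2 hc2 (by show u (L - L/2) - k = 0; rw [show L - L/2 = L/2 by ring]; simp [hk])
  -- rewrite reflected integrals
  have e1 : ∫ x in (0:ℝ)..(L/2), (u' (L - x) * (-1))^2 = ∫ x in (L/2)..L, (u' x)^2 := by
    have : (fun x => (u' (L - x) * (-1))^2) = fun x => (fun t => (u' t)^2) (L - x) := by
      funext x; ring
    rw [this, intervalIntegral.integral_comp_sub_left (fun t => (u' t)^2) L,
      show L - L/2 = L/2 by ring, sub_zero]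
  have e2 : ∫ x in (0:ℝ)..(L/2), (u (L - x) - k)^2 = ∫ x in (L/2)..L, (u x - k)^2 := by
    have : (fun x => (u (L - x) - k)^2) = fun x => (fun t => (u t - k)^2) (L - x) := by
      funext x; rfl
    rw [this, intervalIntegral.integral_comp_sub_left (fun t => (u t - k)^2) L,
      show L - L/2 = L/2 by ring, sub_zero]
  rw [e1, e2] at A2
  -- combine halves
  have hsplitd : (∫ x in (0:ℝ)..(L/2), (u' x)^2) + ∫ x in (L/2)..L, (u' x)^2
      = ∫ x in (0:ℝ)..L, (u' x)^2 :=
    intervalIntegral.integral_add_adjacent_intervals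
      (hIntSub hL2.le le_rfl (by linarith) (hu'c.pow 2))
      (hIntSub (by linarith) hL2.le le_rfl (hu'c.pow 2))
  have hsplitv : (∫ x in (0:ℝ)..(L/2), (u x - k)^2) + ∫ x in (L/2)..L, (u x - k)^2
      = ∫ x in (0:ℝ)..L, (u x - k)^2 :=
    intervalIntegral.integral_add_adjacent_intervals
      (hIntSub hL2.le le_rfl (by linarith) (hukc.pow 2))
      (hIntSub (by linarith) hL2.le le_rfl (hukc.pow 2))
  have hq : (π/(2*(L/2)))^2 = (π/L)^2 := by rw [show 2*(L/2) = L by ring]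
  rw [hq] at A1 A2
  have hBstep : (π/L)^2 * ∫ x in (0:ℝ)..L, (u x - k)^2 ≤ ∫ x in (0:ℝ)..L, (u' x)^2 := by
    have hmul : (π/L)^2 * ∫ x in (0:ℝ)..L, (u x - k)^2
        = (π/L)^2 * (∫ x in (0:ℝ)..(L/2), (u x - k)^2)
          + (π/L)^2 * ∫ x in (L/2)..L, (u x - k)^2 := by
      rw [← hsplitv]; ring
    linarith [A1, A2, hmul, hsplitd]
  -- weighted comparisons
  have W1 : m^2 * (∫ x in (0:ℝ)..L, (u' x)^2) ≤ ∫ x in (0:ℝ)..L, (u' x)^2 * (φ x)^2 := by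
    rw [← intervalIntegral.integral_const_mul]
    apply intervalIntegral.integral_mono_on hL.le
    · exact hIntSub hL.le le_rfl le_rfl (continuousOn_const.mul (hu'c.pow 2))
    · exact hIntSub hL.le le_rfl le_rfl ((hu'c.pow 2).mul hφc2)
    · intro x hx
      have h1 := (hmem x hx).1
      have hsq : m^2 ≤ (φ x)^2 := by nlinarith
      show m^2 * (u' x)^2 ≤ (u' x)^2 * (φ x)^2
      calc m^2 * (u' x)^2 ≤ (φ x)^2 * (u' x)^2 := mul_le_mul_of_nonneg_right hsq (sq_nonneg _)
        _ = (u' x)^2 * (φ x)^2 := by ring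
  have W2 : (∫ x in (0:ℝ)..L, (u x - k)^2 * (φ x)^2) ≤ M^2 * ∫ x in (0:ℝ)..L, (u x - k)^2 := by
    rw [← intervalIntegral.integral_const_mul]
    apply intervalIntegral.integral_mono_on hL.le
    · exact hIntSub hL.le le_rfl le_rfl ((hukc.pow 2).mul hφc2)
    · exact hIntSub hL.le le_rfl le_rfl (continuousOn_const.mul (hukc.pow 2))
    · intro x hx
      have h1 := (hmem x hx).1
      have h2 := (hmem x hx).2
      have hsq : (φ x)^2 ≤ M^2 := by nlinarith
      show (u x - k)^2 * (φ x)^2 ≤ M^2 * (u x - k)^2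
      calc (u x - k)^2 * (φ x)^2 ≤ (u x - k)^2 * M^2 :=
            mul_le_mul_of_nonneg_left hsq (sq_nonneg _)
        _ = M^2 * (u x - k)^2 := by ring
  have W3 : (∫ x in (0:ℝ)..L, (u x)^2 * (φ x)^2) ≤ ∫ x in (0:ℝ)..L, (u x - k)^2 * (φ x)^2 := by
    have e3 : ∫ x in (0:ℝ)..L, (u x - k)^2 * (φ x)^2
        = (∫ x in (0:ℝ)..L, ((u x)^2 * (φ x)^2 - (2*k) * (u x * (φ x)^2)))
          + k^2 * ∫ x in (0:ℝ)..L, (φ x)^2 := by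
      rw [← intervalIntegral.integral_const_mul, ← intervalIntegral.integral_add]
      · apply intervalIntegral.integral_congr
        intro x hx
        ring
      · apply IntervalIntegrable.sub
        · exact hIntSub hL.le le_rfl le_rfl ((hucont.pow 2).mul hφc2)
        · exact hIntSub hL.le le_rfl le_rfl (continuousOn_const.mul (hucont.mul hφc2))
      · exact hIntSub hL.le le_rfl le_rfl (continuousOn_const.mul hφc2)
    have e4 : ∫ x in (0:ℝ)..L, ((u x)^2 * (φ x)^2 - (2*k) * (u x * (φ x)^2))
        = (∫ x in (0:ℝ)..L, (u x)^2 * (φ x)^2) - (2*k) * ∫ x in (0:ℝ)..L, u x * (φ x)^2 := by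
      rw [← intervalIntegral.integral_const_mul, ← intervalIntegral.integral_sub]
      · exact hIntSub hL.le le_rfl le_rfl ((hucont.pow 2).mul hφc2)
      · exact hIntSub hL.le le_rfl le_rfl (continuousOn_const.mul (hucont.mul hφc2))
    have e5 : 0 ≤ k^2 * ∫ x in (0:ℝ)..L, (φ x)^2 := by
      apply mul_nonneg (sq_nonneg k)
      exact intervalIntegral.integral_nonneg hL.le (fun x _ => sq_nonneg _)
    rw [e3, e4, hmean]
    linarith
  -- final chain
  rw [ge_iff_le]
  have hq0 : (0:ℝ) ≤ (m/M)^2 * (π^2/L^2) := by positivity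
  calc (m / M) ^ 2 * (π ^ 2 / L ^ 2) * ∫ x in (0:ℝ)..L, (u x) ^ 2 * (φ x) ^ 2
      ≤ (m / M) ^ 2 * (π ^ 2 / L ^ 2) * ∫ x in (0:ℝ)..L, (u x - k)^2 * (φ x)^2 :=
        mul_le_mul_of_nonneg_left W3 hq0
    _ ≤ (m / M) ^ 2 * (π ^ 2 / L ^ 2) * (M^2 * ∫ x in (0:ℝ)..L, (u x - k)^2) :=
        mul_le_mul_of_nonneg_left W2 hq0
    _ = m^2 * ((π/L)^2 * ∫ x in (0:ℝ)..L, (u x - k)^2) := by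
        field_simp
    _ ≤ m^2 * ∫ x in (0:ℝ)..L, (u' x)^2 :=
        mul_le_mul_of_nonneg_left hBstep (sq_nonneg m)
    _ ≤ ∫ x in (0:ℝ)..L, (u' x)^2 * (φ x)^2 := W1
end

section
/- Let L > 0 and let φ : [0, L] → ℝ be a positive continuous function with 0 < m ≤ φ ≤ M. Suppose the spectral gap of the Neumann Schrödinger operator on (0,L) with ground state φ equals the lowest nonzero eigenvalue of the weighted Neumann form u ↦ ∫_0^L (u')² φ² / ∫_0^L u² φ² (ground state transformation). Then the spectral gap Γ satisfies Γ ≥ (m/M)²·π²/L². -/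
open Real intervalIntegral

open Set MeasureTheory

lemma kirsch_lemA {ℓ : ℝ} (hℓ : 0 < ℓ) {v v' : ℝ → ℝ}
    (hv : ∀ x ∈ Set.Icc 0 ℓ, HasDerivAt v (v' x) x)
    (hv' : ContinuousOn v' (Set.Icc 0 ℓ))
    (h0 : v ℓ = 0) :
    (π / (2 * ℓ)) ^ 2 * ∫ x in (0:ℝ)..ℓ, (v x) ^ 2 ≤ ∫ x in (0:ℝ)..ℓ, (v' x) ^ 2 := by
  set k : ℝ := π / (2 * ℓ) with hk_def
  have hπ := Real.pi_pos
  have hk : 0 < k := by positivity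
  have hkl : k * ℓ = π / 2 := by rw [hk_def]; field_simp
  have hvc : ContinuousOn v (Set.Icc 0 ℓ) :=
    fun x hx => (hv x hx).continuousAt.continuousWithinAt
  -- integrability helpers
  have hv2i : ∀ s t : ℝ, s ∈ Set.Icc 0 ℓ → t ∈ Set.Icc 0 ℓ →
      IntervalIntegrable (fun x => (v x) ^ 2) volume s t := by
    intro s t hs ht
    apply ContinuousOn.intervalIntegrable
    exact ((hvc.mono (uIcc_subset_Icc hs ht)).pow 2)
  have hv'2i : ∀ s t : ℝ, s ∈ Set.Icc 0 ℓ → t ∈ Set.Icc 0 ℓ →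
      IntervalIntegrable (fun x => (v' x) ^ 2) volume s t := by
    intro s t hs ht
    apply ContinuousOn.intervalIntegrable
    exact ((hv'.mono (uIcc_subset_Icc hs ht)).pow 2)
  have hmem0 : (0:ℝ) ∈ Set.Icc 0 ℓ := ⟨le_refl _, hℓ.le⟩
  have hmeml : ℓ ∈ Set.Icc 0 ℓ := ⟨hℓ.le, le_refl _⟩
  set D : ℝ := ∫ x in (0:ℝ)..ℓ, (v' x) ^ 2 with hD_def
  -- main inequality for b ∈ Ioo 0 ℓ
  have key : ∀ b ∈ Set.Ioo (0:ℝ) ℓ, k ^ 2 * ∫ x in (0:ℝ)..b, (v x) ^ 2 ≤ D := by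
    intro b hb
    have hb0 : 0 < b := hb.1
    have hbl : b < ℓ := hb.2
    have hbmem : b ∈ Set.Icc 0 ℓ := ⟨hb0.le, hbl.le⟩
    have hsub1 : Set.Icc (0:ℝ) b ⊆ Set.Icc 0 ℓ := Set.Icc_subset_Icc le_rfl hbl.le
    have hsub2 : Set.Icc b ℓ ⊆ Set.Icc 0 ℓ := Set.Icc_subset_Icc hb0.le le_rfl
    set T : ℝ → ℝ := fun x => Real.tan (k * x) with hT_def
    have hcos : ∀ x ∈ Set.Icc (0:ℝ) b, Real.cos (k * x) ≠ 0 := by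
      intro x hx
      apply ne_of_gt
      apply Real.cos_pos_of_mem_Ioo
      constructor
      · nlinarith [hx.1]
      · have : k * x ≤ k * b := by nlinarith [hx.2]
        have hkb : k * b < π / 2 := by rw [← hkl]; nlinarith
        linarith
    have hTd : ∀ x ∈ Set.Icc (0:ℝ) b, HasDerivAt T (k * (1 + T x ^ 2)) x := by
      intro x hx
      have h1 : HasDerivAt (fun y : ℝ => k * y) k x := by
        simpa using (hasDerivAt_id x).const_mul k
      have h2 := (Real.hasDerivAt_tan (hcos x hx)).comp x h1
      have h3 : 1 / Real.cos (k * x) ^ 2 * k = k * (1 + T x ^ 2) := by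
        have := Real.inv_one_add_tan_sq (hcos x hx)
        have hc2 : Real.cos (k * x) ^ 2 ≠ 0 := pow_ne_zero 2 (hcos x hx)
        have e : 1 + T x ^ 2 = 1 / Real.cos (k * x) ^ 2 := by
          rw [← this, one_div, inv_inv]
        rw [e]; ring
      rw [h3] at h2
      exact h2
    have hTc : ContinuousOn T (Set.Icc 0 b) :=
      fun x hx => (hTd x hx).continuousAt.continuousWithinAt
    have hT0 : T 0 = 0 := by simp [hT_def]
    -- integration by parts
    have hIBP : (∫ x in (0:ℝ)..b, ((2 * v x * v' x) * T x + (v x) ^ 2 * (k * (1 + T x ^ 2))))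
        = (v b) ^ 2 * T b := by
      have huicc : Set.uIcc (0:ℝ) b = Set.Icc 0 b := Set.uIcc_of_le hb0.le
      have h := intervalIntegral.integral_deriv_mul_eq_sub
        (u := fun x => (v x) ^ 2) (v := T)
        (u' := fun x => 2 * v x * v' x) (v' := fun x => k * (1 + T x ^ 2))
        (a := 0) (b := b)
        (fun x hx => by
          have := (hv x (hsub1 (huicc ▸ hx)))
          exact (this.pow 2).congr_deriv (by rw [show (2:ℕ) - 1 = 1 from rfl, pow_one, Nat.cast_ofNat]))
        (fun x hx => hTd x (huicc ▸ hx))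
        (by
          apply ContinuousOn.intervalIntegrable
          rw [huicc]
          exact (continuousOn_const.mul (hvc.mono hsub1)).mul (hv'.mono hsub1))
        (by
          apply ContinuousOn.intervalIntegrable
          rw [huicc]
          exact continuousOn_const.mul (continuousOn_const.add (hTc.pow 2)))
      rw [h, hT0]; ring
    -- expand the square
    have hsq : 0 ≤ ∫ x in (0:ℝ)..b, (v' x + k * v x * T x) ^ 2 := by
      apply intervalIntegral.integral_nonneg hb0.le
      intro x _; positivity
    have hint1 : IntervalIntegrable (fun x => (v' x) ^ 2 - k ^ 2 * (v x) ^ 2) volume 0 b := by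
      apply ContinuousOn.intervalIntegrable
      rw [Set.uIcc_of_le hb0.le]
      exact ((hv'.mono hsub1).pow 2).sub (continuousOn_const.mul ((hvc.mono hsub1).pow 2))
    have hint2 : IntervalIntegrable
        (fun x => (2 * v x * v' x) * T x + (v x) ^ 2 * (k * (1 + T x ^ 2))) volume 0 b := by
      apply ContinuousOn.intervalIntegrable
      rw [Set.uIcc_of_le hb0.le]
      exact (((continuousOn_const.mul (hvc.mono hsub1)).mul (hv'.mono hsub1)).mul hTc).add
        (((hvc.mono hsub1).pow 2).mul (continuousOn_const.mul (continuousOn_const.add (hTc.pow 2))))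
    have hexp : (∫ x in (0:ℝ)..b, (v' x + k * v x * T x) ^ 2)
        = (∫ x in (0:ℝ)..b, ((v' x) ^ 2 - k ^ 2 * (v x) ^ 2))
          + k * ((v b) ^ 2 * T b) := by
      rw [← hIBP, ← intervalIntegral.integral_const_mul,
        ← intervalIntegral.integral_add hint1 (hint2.const_mul k)]
      apply intervalIntegral.integral_congr
      intro x _
      ring
    have hsplit2 : (∫ x in (0:ℝ)..b, ((v' x) ^ 2 - k ^ 2 * (v x) ^ 2))
        = (∫ x in (0:ℝ)..b, (v' x) ^ 2) - k ^ 2 * ∫ x in (0:ℝ)..b, (v x) ^ 2 := by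
      rw [intervalIntegral.integral_sub (hv'2i 0 b hmem0 hbmem)
        ((hv2i 0 b hmem0 hbmem).const_mul _), intervalIntegral.integral_const_mul]
    -- Cauchy-Schwarz tail bound
    have hFTC : (∫ x in b..ℓ, v' x) = - v b := by
      rw [intervalIntegral.integral_eq_sub_of_hasDerivAt
        (fun x hx => hv x (hsub2 ((Set.uIcc_of_le hbl.le) ▸ hx)))
        (by
          apply ContinuousOn.intervalIntegrable
          rw [Set.uIcc_of_le hbl.le]
          exact hv'.mono hsub2), h0]
      ring
    have hCS : (v b) ^ 2 ≤ (ℓ - b) * ∫ x in b..ℓ, (v' x) ^ 2 := by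
      set c : ℝ := (- v b) / (ℓ - b) with hc_def
      have h1 : 0 ≤ ∫ x in b..ℓ, (v' x - c) ^ 2 := by
        apply intervalIntegral.integral_nonneg hbl.le
        intro x _; positivity
      have hv'i : IntervalIntegrable v' volume b ℓ := by
        apply ContinuousOn.intervalIntegrable
        rw [Set.uIcc_of_le hbl.le]; exact hv'.mono hsub2
      have h2 : (∫ x in b..ℓ, (v' x - c) ^ 2)
          = (∫ x in b..ℓ, (v' x) ^ 2) - (2 * c) * (- v b) + (ℓ - b) * c ^ 2 := by
        have e1 : (∫ x in b..ℓ, (v' x - c) ^ 2)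
            = ∫ x in b..ℓ, ((v' x) ^ 2 - (2 * c) * v' x + c ^ 2) :=
          intervalIntegral.integral_congr (fun x _ => by ring)
        rw [e1, intervalIntegral.integral_add
            (((hv'2i b ℓ hbmem hmeml).sub (hv'i.const_mul _)))
            intervalIntegrable_const,
          intervalIntegral.integral_sub (hv'2i b ℓ hbmem hmeml) (hv'i.const_mul _),
          intervalIntegral.integral_const_mul, hFTC, intervalIntegral.integral_const]
        simp only [smul_eq_mul]
        try ring
      have hlb : 0 < ℓ - b := by linarith
      rw [h2, hc_def] at h1
      have h3 : 0 ≤ (∫ x in b..ℓ, (v' x) ^ 2) - (v b) ^ 2 / (ℓ - b) := by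
        have : (2 * ((- v b) / (ℓ - b))) * (- v b) - (ℓ - b) * ((- v b) / (ℓ - b)) ^ 2
            = (v b) ^ 2 / (ℓ - b) := by field_simp; ring
        nlinarith [h1]
      have := (div_le_iff₀ hlb).mp (by linarith : (v b) ^ 2 / (ℓ - b) ≤ ∫ x in b..ℓ, (v' x) ^ 2)
      linarith [this]
    -- tan bound
    have hTb_nonneg : 0 ≤ T b := by
      apply Real.tan_nonneg_of_nonneg_of_le_pi_div_two (mul_nonneg hk.le hb0.le)
      rw [← hkl]; nlinarith
    have hTb : T b ≤ 1 / (k * (ℓ - b)) := by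
      have hy : 0 < k * (ℓ - b) := by nlinarith
      have hy2 : k * (ℓ - b) < π / 2 := by nlinarith [hkl]
      have e : k * b = π / 2 - k * (ℓ - b) := by rw [← hkl]; ring
      have : T b = (Real.tan (k * (ℓ - b)))⁻¹ := by
        rw [hT_def]; simp only []
        rw [e, Real.tan_pi_div_two_sub]
      rw [this]
      have htan := Real.lt_tan hy hy2
      have htanpos : 0 < Real.tan (k * (ℓ - b)) := lt_trans hy htan
      rw [one_div]
      exact inv_anti₀ hy htan.le
    -- combine
    have htail_nonneg : 0 ≤ ∫ x in b..ℓ, (v' x) ^ 2 := by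
      apply intervalIntegral.integral_nonneg hbl.le
      intro x _; positivity
    have hbd : k * ((v b) ^ 2 * T b) ≤ ∫ x in b..ℓ, (v' x) ^ 2 := by
      have hlb : (0:ℝ) < ℓ - b := by linarith
      have h1 : (v b) ^ 2 * T b ≤ ((ℓ - b) * ∫ x in b..ℓ, (v' x) ^ 2) * (1 / (k * (ℓ - b))) := by
        exact mul_le_mul hCS hTb hTb_nonneg
          (mul_nonneg hlb.le htail_nonneg)
      have h2 : k * (((ℓ - b) * ∫ x in b..ℓ, (v' x) ^ 2) * (1 / (k * (ℓ - b))))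
          = ∫ x in b..ℓ, (v' x) ^ 2 := by
        field_simp
      calc k * ((v b) ^ 2 * T b)
          ≤ k * (((ℓ - b) * ∫ x in b..ℓ, (v' x) ^ 2) * (1 / (k * (ℓ - b)))) := by
            exact mul_le_mul_of_nonneg_left h1 hk.le
        _ = _ := h2
    have hadj : (∫ x in (0:ℝ)..b, (v' x) ^ 2) + (∫ x in b..ℓ, (v' x) ^ 2) = D :=
      intervalIntegral.integral_add_adjacent_intervals
        (hv'2i 0 b hmem0 hbmem) (hv'2i b ℓ hbmem hmeml)
    have := hsq
    rw [hexp, hsplit2] at this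
    linarith
  -- limit b → ℓ
  have hvb : ∃ C : ℝ, 0 ≤ C ∧ ∀ x ∈ Set.Icc (0:ℝ) ℓ, (v x) ^ 2 ≤ C := by
    obtain ⟨C, hC⟩ := isCompact_Icc.exists_bound_of_continuousOn (hvc.pow 2)
    refine ⟨|C|, abs_nonneg C, fun x hx => ?_⟩
    calc (v x) ^ 2 ≤ |(v x) ^ 2| := le_abs_self _
      _ ≤ |C| := le_trans (hC x hx) (le_abs_self C)
  obtain ⟨C, hC0, hC⟩ := hvb
  have hfinal : k ^ 2 * ∫ x in (0:ℝ)..ℓ, (v x) ^ 2 ≤ D := by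
    apply le_of_forall_sub_le
    intro ε hε
    set δ : ℝ := min (ℓ / 2) (ε / (k ^ 2 * (C + 1))) with hδ_def
    have hδpos : 0 < δ := lt_min (by linarith) (by positivity)
    set b : ℝ := ℓ - δ with hb_def
    clear_value δ b
    have hbI : b ∈ Set.Ioo (0:ℝ) ℓ := by
      constructor
      · have : δ ≤ ℓ / 2 := by rw [hδ_def]; exact min_le_left _ _
        simp only [hb_def]; linarith
      · simp only [hb_def]; linarith
    have hkey := key b hbI
    have hbmem : b ∈ Set.Icc 0 ℓ := ⟨hbI.1.le, hbI.2.le⟩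
    have hadj : (∫ x in (0:ℝ)..b, (v x) ^ 2) + (∫ x in b..ℓ, (v x) ^ 2)
        = ∫ x in (0:ℝ)..ℓ, (v x) ^ 2 :=
      intervalIntegral.integral_add_adjacent_intervals
        (hv2i 0 b hmem0 hbmem) (hv2i b ℓ hbmem hmeml)
    have htail : (∫ x in b..ℓ, (v x) ^ 2) ≤ C * δ := by
      have h1 : (∫ x in b..ℓ, (v x) ^ 2) ≤ ∫ x in b..ℓ, C := by
        apply intervalIntegral.integral_mono_on hbI.2.le
          (hv2i b ℓ hbmem hmeml) intervalIntegrable_const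
        intro x hx
        exact hC x (Set.Icc_subset_Icc hbI.1.le le_rfl hx)
      have h2 : (∫ x in b..ℓ, C) = C * δ := by
        rw [intervalIntegral.integral_const]
        simp [hb_def, smul_eq_mul]
        ring
      linarith
    have hδ2 : δ ≤ ε / (k ^ 2 * (C + 1)) := by rw [hδ_def]; exact min_le_right _ _
    have hpos : (0:ℝ) < k ^ 2 * (C + 1) := by positivity
    have h4 : k ^ 2 * (C + 1) * δ ≤ ε := by
      calc k ^ 2 * (C + 1) * δ ≤ k ^ 2 * (C + 1) * (ε / (k ^ 2 * (C + 1))) :=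
            mul_le_mul_of_nonneg_left hδ2 hpos.le
        _ = ε := by rw [mul_comm]; exact div_mul_cancel₀ ε hpos.ne'
    have h3 : k ^ 2 * (C * δ) ≤ ε := by nlinarith [mul_nonneg (sq_nonneg k) hδpos.le]
    have h5 : k ^ 2 * (∫ x in b..ℓ, (v x) ^ 2) ≤ k ^ 2 * (C * δ) :=
      mul_le_mul_of_nonneg_left htail (sq_nonneg k)
    have h6 : k ^ 2 * (∫ x in (0:ℝ)..ℓ, (v x) ^ 2)
        = k ^ 2 * (∫ x in (0:ℝ)..b, (v x) ^ 2) + k ^ 2 * (∫ x in b..ℓ, (v x) ^ 2) := by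
      rw [← hadj]; ring
    linarith
  exact hfinal

lemma kirsch_wirt {L : ℝ} (hL : 0 < L) {u u' : ℝ → ℝ}
    (hu : ∀ x ∈ Set.Icc 0 L, HasDerivAt u (u' x) x)
    (hu' : ContinuousOn u' (Set.Icc 0 L)) :
    (π / L) ^ 2 * ∫ x in (0:ℝ)..L, (u x - u (L / 2)) ^ 2
      ≤ ∫ x in (0:ℝ)..L, (u' x) ^ 2 := by
  have hπ := Real.pi_pos
  have hh : 0 < L / 2 := by linarith
  set c : ℝ := u (L / 2) with hc_def
  have hucont : ContinuousOn u (Set.Icc 0 L) :=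
    fun x hx => (hu x hx).continuousAt.continuousWithinAt
  have hsubL : Set.Icc (0:ℝ) (L / 2) ⊆ Set.Icc 0 L := Set.Icc_subset_Icc le_rfl (by linarith)
  have hsubR : Set.Icc (L / 2) L ⊆ Set.Icc 0 L := Set.Icc_subset_Icc hh.le le_rfl
  -- left half
  have hleft : (π / L) ^ 2 * ∫ x in (0:ℝ)..(L / 2), (u x - c) ^ 2
      ≤ ∫ x in (0:ℝ)..(L / 2), (u' x) ^ 2 := by
    have h := kirsch_lemA hh (v := fun x => u x - c) (v' := u')
      (fun x hx => (hu x (hsubL hx)).sub_const c)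
      (hu'.mono hsubL) (by simp [hc_def])
    have e : π / (2 * (L / 2)) = π / L := by ring_nf
    rw [e] at h
    exact h
  -- right half, by reflection
  have hright : (π / L) ^ 2 * ∫ x in (L / 2)..L, (u x - c) ^ 2
      ≤ ∫ x in (L / 2)..L, (u' x) ^ 2 := by
    have hmaps : ∀ x ∈ Set.Icc (0:ℝ) (L / 2), L - x ∈ Set.Icc (L / 2) L := by
      intro x hx
      exact ⟨by linarith [hx.2], by linarith [hx.1]⟩
    have hw : ∀ x ∈ Set.Icc (0:ℝ) (L / 2),
        HasDerivAt (fun y => u (L - y) - c) (-u' (L - x)) x := by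
      intro x hx
      have hin : HasDerivAt (fun y : ℝ => L - y) (-1) x := by
        simpa using (hasDerivAt_id x).const_sub L
      have := ((hu (L - x) (hsubR (hmaps x hx))).comp x hin).sub_const c
      simpa [mul_comm] using this
    have hw' : ContinuousOn (fun x => -u' (L - x)) (Set.Icc 0 (L / 2)) := by
      apply ContinuousOn.neg
      apply hu'.comp (Continuous.continuousOn (by continuity))
      intro x hx
      exact hsubR (hmaps x hx)
    have h := kirsch_lemA hh (v := fun y => u (L - y) - c) (v' := fun x => -u' (L - x))
      hw hw' (by show u (L - L / 2) - c = 0; rw [show L - L / 2 = L / 2 by ring]; simp [hc_def])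
    have e : π / (2 * (L / 2)) = π / L := by ring_nf
    rw [e] at h
    have e1 : (∫ x in (0:ℝ)..(L / 2), (u (L - x) - c) ^ 2)
        = ∫ x in (L / 2)..L, (u x - c) ^ 2 := by
      have := intervalIntegral.integral_comp_sub_left
        (a := (0:ℝ)) (b := L / 2) (fun t => (u t - c) ^ 2) L
      rw [show L - L / 2 = L / 2 by ring, sub_zero] at this
      exact this
    have e2 : (∫ x in (0:ℝ)..(L / 2), (-u' (L - x)) ^ 2)
        = ∫ x in (L / 2)..L, (u' x) ^ 2 := by
      have e2' : (∫ x in (0:ℝ)..(L / 2), (-u' (L - x)) ^ 2)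
          = ∫ x in (0:ℝ)..(L / 2), (u' (L - x)) ^ 2 :=
        intervalIntegral.integral_congr (fun x _ => by ring)
      have := intervalIntegral.integral_comp_sub_left
        (a := (0:ℝ)) (b := L / 2) (fun t => (u' t) ^ 2) L
      rw [show L - L / 2 = L / 2 by ring, sub_zero] at this
      rw [e2', this]
    rw [e1, e2] at h
    exact h
  -- combine
  have hv2L : IntervalIntegrable (fun x => (u x - c) ^ 2) volume 0 (L / 2) := by
    apply ContinuousOn.intervalIntegrable
    exact (((hucont.mono (by rw [Set.uIcc_of_le hh.le]; exact hsubL)).sub continuousOn_const).pow 2)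
  have hv2R : IntervalIntegrable (fun x => (u x - c) ^ 2) volume (L / 2) L := by
    apply ContinuousOn.intervalIntegrable
    exact (((hucont.mono (by rw [Set.uIcc_of_le (by linarith : L / 2 ≤ L)]; exact hsubR)).sub
      continuousOn_const).pow 2)
  have hu2L : IntervalIntegrable (fun x => (u' x) ^ 2) volume 0 (L / 2) := by
    apply ContinuousOn.intervalIntegrable
    exact ((hu'.mono (by rw [Set.uIcc_of_le hh.le]; exact hsubL)).pow 2)
  have hu2R : IntervalIntegrable (fun x => (u' x) ^ 2) volume (L / 2) L := by
    apply ContinuousOn.intervalIntegrable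
    exact ((hu'.mono (by rw [Set.uIcc_of_le (by linarith : L / 2 ≤ L)]; exact hsubR)).pow 2)
  have hadj1 : (∫ x in (0:ℝ)..(L / 2), (u x - c) ^ 2) + (∫ x in (L / 2)..L, (u x - c) ^ 2)
      = ∫ x in (0:ℝ)..L, (u x - c) ^ 2 :=
    intervalIntegral.integral_add_adjacent_intervals hv2L hv2R
  have hadj2 : (∫ x in (0:ℝ)..(L / 2), (u' x) ^ 2) + (∫ x in (L / 2)..L, (u' x) ^ 2)
      = ∫ x in (0:ℝ)..L, (u' x) ^ 2 :=
    intervalIntegral.integral_add_adjacent_intervals hu2L hu2R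
  rw [← hadj1, ← hadj2]
  nlinarith [hleft, hright]

theorem stmt_17 (L m M Γ : ℝ) (φ : ℝ → ℝ)
    (hL : 0 < L)
    (hφcont : ContinuousOn φ (Set.Icc 0 L))
    (hm : 0 < m) (hφ : ∀ x ∈ Set.Icc 0 L, m ≤ φ x ∧ φ x ≤ M)
    (hΓ : Γ = sInf { r : ℝ | ∃ u u' : ℝ → ℝ,
        (∀ x ∈ Set.Icc 0 L, HasDerivAt u (u' x) x) ∧
        ContinuousOn u' (Set.Icc 0 L) ∧
        (∫ x in (0:ℝ)..L, u x * (φ x) ^ 2) = 0 ∧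
        (∫ x in (0:ℝ)..L, (u x) ^ 2 * (φ x) ^ 2) ≠ 0 ∧
        r = (∫ x in (0:ℝ)..L, (u' x) ^ 2 * (φ x) ^ 2) /
            ∫ x in (0:ℝ)..L, (u x) ^ 2 * (φ x) ^ 2 }) :
    Γ ≥ (m / M) ^ 2 * (π ^ 2 / L ^ 2) := by
  have hπ := Real.pi_pos
  have h0L : (0:ℝ) ∈ Set.Icc 0 L := ⟨le_rfl, hL.le⟩
  have hM : 0 < M := lt_of_lt_of_le hm (le_trans (hφ 0 h0L).1 (hφ 0 h0L).2)
  have huIcc : Set.uIcc (0:ℝ) L = Set.Icc 0 L := Set.uIcc_of_le hL.le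
  have hφ2 : ∀ x ∈ Set.Icc 0 L, m ^ 2 ≤ (φ x) ^ 2 ∧ (φ x) ^ 2 ≤ M ^ 2 := by
    intro x hx
    obtain ⟨h1, h2⟩ := hφ x hx
    constructor
    · nlinarith
    · nlinarith
  have hφ2cont : ContinuousOn (fun x => (φ x) ^ 2) (Set.Icc 0 L) := hφcont.pow 2
  have hφ2int : IntervalIntegrable (fun x => (φ x) ^ 2) volume 0 L := by
    apply ContinuousOn.intervalIntegrable; rw [huIcc]; exact hφ2cont
  -- the set is nonempty
  set S := { r : ℝ | ∃ u u' : ℝ → ℝ,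
        (∀ x ∈ Set.Icc 0 L, HasDerivAt u (u' x) x) ∧
        ContinuousOn u' (Set.Icc 0 L) ∧
        (∫ x in (0:ℝ)..L, u x * (φ x) ^ 2) = 0 ∧
        (∫ x in (0:ℝ)..L, (u x) ^ 2 * (φ x) ^ 2) ≠ 0 ∧
        r = (∫ x in (0:ℝ)..L, (u' x) ^ 2 * (φ x) ^ 2) /
            ∫ x in (0:ℝ)..L, (u x) ^ 2 * (φ x) ^ 2 } with hS_def
  have hIφ : 0 < ∫ x in (0:ℝ)..L, (φ x) ^ 2 := by
    have h1 : (∫ x in (0:ℝ)..L, m ^ 2) ≤ ∫ x in (0:ℝ)..L, (φ x) ^ 2 := by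
      apply intervalIntegral.integral_mono_on hL.le intervalIntegrable_const hφ2int
      intro x hx; exact (hφ2 x hx).1
    have h2 : (∫ x in (0:ℝ)..L, m ^ 2) = L * m ^ 2 := by
      rw [intervalIntegral.integral_const]; simp [smul_eq_mul]
    nlinarith [mul_pos hL (pow_pos hm 2)]
  have hSne : S.Nonempty := by
    set c : ℝ := (∫ x in (0:ℝ)..L, x * (φ x) ^ 2) / (∫ x in (0:ℝ)..L, (φ x) ^ 2) with hc_def
    refine ⟨_, fun x => x - c, fun _ => (1:ℝ), ?_, continuousOn_const, ?_, ?_, rfl⟩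
    · intro x _
      simpa using (hasDerivAt_id x).sub_const c
    · have hxint : IntervalIntegrable (fun x => x * (φ x) ^ 2) volume 0 L := by
        apply ContinuousOn.intervalIntegrable; rw [huIcc]
        exact (continuousOn_id.mul hφ2cont)
      have e : (∫ x in (0:ℝ)..L, (x - c) * (φ x) ^ 2)
          = (∫ x in (0:ℝ)..L, x * (φ x) ^ 2) - c * ∫ x in (0:ℝ)..L, (φ x) ^ 2 := by
        rw [← intervalIntegral.integral_const_mul,
          ← intervalIntegral.integral_sub hxint (hφ2int.const_mul c)]
        apply intervalIntegral.integral_congr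
        intro x _; ring
      rw [e, hc_def, div_mul_cancel₀ _ hIφ.ne']
      ring
    · have hpos : 0 < ∫ x in (0:ℝ)..L, (x - c) ^ 2 := by
        have hFTC : (∫ x in (0:ℝ)..L, (x - c) ^ 2) = ((L - c) ^ 3 - (0 - c) ^ 3) / 3 := by
          have h := intervalIntegral.integral_eq_sub_of_hasDerivAt
            (f := fun x => (x - c) ^ 3 / 3) (f' := fun x => (x - c) ^ 2)
            (a := 0) (b := L)
            (fun x _ => by
              have h1 := ((hasDerivAt_id x).sub_const c).pow 3
              have h2 := h1.div_const 3
              exact h2.congr_deriv (by rw [show (3:ℕ) - 1 = 2 from rfl, Nat.cast_ofNat, id_eq]; ring))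
            (by
              apply ContinuousOn.intervalIntegrable
              exact ((continuousOn_id.sub continuousOn_const).pow 2))
          rw [h]
          ring
        rw [hFTC]
        rcases eq_or_ne c 0 with hc | hc
        · rw [hc]; nlinarith [pow_pos hL 3]
        · have hc2 : 0 < c ^ 2 := by positivity
          nlinarith [sq_nonneg (2 * L - 3 * c)]
      have hmono : m ^ 2 * (∫ x in (0:ℝ)..L, (x - c) ^ 2)
          ≤ ∫ x in (0:ℝ)..L, (x - c) ^ 2 * (φ x) ^ 2 := by
        rw [← intervalIntegral.integral_const_mul]
        apply intervalIntegral.integral_mono_on hL.le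
        · exact (ContinuousOn.intervalIntegrable (by
            rw [huIcc]
            exact continuousOn_const.mul ((continuousOn_id.sub continuousOn_const).pow 2)))
        · exact (ContinuousOn.intervalIntegrable (by
            rw [huIcc]
            exact ((continuousOn_id.sub continuousOn_const).pow 2).mul hφ2cont))
        · intro x hx
          have := (hφ2 x hx).1
          nlinarith [sq_nonneg (x - c)]
      intro hzero
      rw [hzero] at hmono
      nlinarith [mul_pos (pow_pos hm 2) hpos]
  -- lower bound for every element of S
  have hlb : ∀ r ∈ S, (m / M) ^ 2 * (π ^ 2 / L ^ 2) ≤ r := by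
    rintro r ⟨u, u', hu, hu', hmean, hden, hr⟩
    have hucont : ContinuousOn u (Set.Icc 0 L) :=
      fun x hx => (hu x hx).continuousAt.continuousWithinAt
    set c0 : ℝ := u (L / 2) with hc0_def
    set N : ℝ := ∫ x in (0:ℝ)..L, (u' x) ^ 2 * (φ x) ^ 2 with hN_def
    set Dm : ℝ := ∫ x in (0:ℝ)..L, (u x) ^ 2 * (φ x) ^ 2 with hDm_def
    -- integrability
    have hu'2int : IntervalIntegrable (fun x => (u' x) ^ 2) volume 0 L := by
      apply ContinuousOn.intervalIntegrable; rw [huIcc]; exact hu'.pow 2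
    have hu2φint : IntervalIntegrable (fun x => (u x) ^ 2 * (φ x) ^ 2) volume 0 L := by
      apply ContinuousOn.intervalIntegrable; rw [huIcc]; exact (hucont.pow 2).mul hφ2cont
    have hu'2φint : IntervalIntegrable (fun x => (u' x) ^ 2 * (φ x) ^ 2) volume 0 L := by
      apply ContinuousOn.intervalIntegrable; rw [huIcc]; exact (hu'.pow 2).mul hφ2cont
    have huφint : IntervalIntegrable (fun x => u x * (φ x) ^ 2) volume 0 L := by
      apply ContinuousOn.intervalIntegrable; rw [huIcc]; exact hucont.mul hφ2cont
    have hv2int : IntervalIntegrable (fun x => (u x - c0) ^ 2) volume 0 L := by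
      apply ContinuousOn.intervalIntegrable; rw [huIcc]
      exact (hucont.sub continuousOn_const).pow 2
    have hv2φint : IntervalIntegrable (fun x => (u x - c0) ^ 2 * (φ x) ^ 2) volume 0 L := by
      apply ContinuousOn.intervalIntegrable; rw [huIcc]
      exact ((hucont.sub continuousOn_const).pow 2).mul hφ2cont
    -- h1 : m^2 * ∫ u'^2 ≤ N
    have h1 : m ^ 2 * (∫ x in (0:ℝ)..L, (u' x) ^ 2) ≤ N := by
      rw [hN_def, ← intervalIntegral.integral_const_mul]
      apply intervalIntegral.integral_mono_on hL.le (hu'2int.const_mul _) hu'2φint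
      intro x hx
      have := (hφ2 x hx).1
      nlinarith [sq_nonneg (u' x)]
    -- h2 : ∫ v^2 φ^2 ≤ M^2 ∫ v^2
    have h2 : (∫ x in (0:ℝ)..L, (u x - c0) ^ 2 * (φ x) ^ 2)
        ≤ M ^ 2 * ∫ x in (0:ℝ)..L, (u x - c0) ^ 2 := by
      rw [← intervalIntegral.integral_const_mul]
      apply intervalIntegral.integral_mono_on hL.le hv2φint (hv2int.const_mul _)
      intro x hx
      have := (hφ2 x hx).2
      nlinarith [sq_nonneg (u x - c0)]
    -- h3 : Dm ≤ ∫ v^2 φ^2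
    have h3 : Dm ≤ ∫ x in (0:ℝ)..L, (u x - c0) ^ 2 * (φ x) ^ 2 := by
      have e : (∫ x in (0:ℝ)..L, (u x - c0) ^ 2 * (φ x) ^ 2)
          = Dm - (2 * c0) * (∫ x in (0:ℝ)..L, u x * (φ x) ^ 2)
            + c0 ^ 2 * ∫ x in (0:ℝ)..L, (φ x) ^ 2 := by
        rw [hDm_def, ← intervalIntegral.integral_const_mul (2 * c0),
          ← intervalIntegral.integral_const_mul (c0 ^ 2),
          ← intervalIntegral.integral_sub hu2φint (huφint.const_mul _),
          ← intervalIntegral.integral_add (hu2φint.sub (huφint.const_mul _))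
            (hφ2int.const_mul _)]
        apply intervalIntegral.integral_congr
        intro x _; ring
      rw [e, hmean]
      nlinarith [hIφ.le, sq_nonneg c0]
    -- h4 : wirtinger
    have h4 : (π / L) ^ 2 * (∫ x in (0:ℝ)..L, (u x - c0) ^ 2)
        ≤ ∫ x in (0:ℝ)..L, (u' x) ^ 2 := kirsch_wirt hL hu hu'
    -- h5 : 0 < Dm
    have h5 : 0 < Dm := by
      rcases lt_or_eq_of_le (intervalIntegral.integral_nonneg hL.le
        (fun x _ => by positivity : ∀ x ∈ Set.Icc 0 L, 0 ≤ (u x) ^ 2 * (φ x) ^ 2)) with h | h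
      · exact h
      · exact absurd h.symm hden
    have hv2nonneg : 0 ≤ ∫ x in (0:ℝ)..L, (u x - c0) ^ 2 :=
      intervalIntegral.integral_nonneg hL.le (fun x _ => sq_nonneg _)
    -- chain
    rw [hr, le_div_iff₀ h5]
    calc (m / M) ^ 2 * (π ^ 2 / L ^ 2) * Dm
        ≤ (m / M) ^ 2 * (π ^ 2 / L ^ 2) * (M ^ 2 * ∫ x in (0:ℝ)..L, (u x - c0) ^ 2) := by
          apply mul_le_mul_of_nonneg_left (le_trans h3 h2) (by positivity)
      _ = m ^ 2 * ((π / L) ^ 2 * ∫ x in (0:ℝ)..L, (u x - c0) ^ 2) := by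
          field_simp
      _ ≤ m ^ 2 * ∫ x in (0:ℝ)..L, (u' x) ^ 2 :=
          mul_le_mul_of_nonneg_left h4 (sq_nonneg m)
      _ ≤ N := h1
  rw [hΓ, ge_iff_le]
  exact le_csInf hSne hlb
end
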